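/- arXiv:2406.15924 — 5 statements merged into one kernel-verified Lean document; each statement's English description precedes it below -/
import Mathlib

section
/- Let q : ℂ² → ℂ be a quadratic form (a homogeneous polynomial of degree 2 in two complex variables) such that the set {q(x,ξ) : (x,ξ) ∈ ℝ²} is not all of ℂ and q(x,ξ) ≠ 0 for every (x,ξ) ∈ ℝ² \ {(0,0)}. Then there exist μ ∈ ℂ \ {0} and a complex linear symplectic transformation T of ℂ² (i.e., a 2×2 complex matrix with determinant 1) such that q(T v) = (μ/(2i))·(v₁² + v₂²) for all v = (v₁,v₂) ∈ ℂ². -/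
open Complex

/-- Polynomial core of the normal form computation. -/
lemma stmt1_polyid (a b μ i v1 v2 : ℂ) (hi : i ^ 2 = -1) :
    4 * a ^ 2 * ((2 * a * (b + μ) - i * μ * (μ - b)) * v1
        + (-2 * i * a * (b + μ) + μ * (μ - b)) * v2) ^ 2
      + 4 * a * b * ((2 * a * (b + μ) - i * μ * (μ - b)) * v1
        + (-2 * i * a * (b + μ) + μ * (μ - b)) * v2)
        * ((-4 * a ^ 2 - 2 * i * a * μ) * v1 + (4 * i * a ^ 2 + 2 * a * μ) * v2)
      + (b ^ 2 - μ ^ 2) * ((-4 * a ^ 2 - 2 * i * a * μ) * v1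
        + (4 * i * a ^ 2 + 2 * a * μ) * v2) ^ 2
      = -32 * i * a ^ 3 * μ ^ 3 * (v1 ^ 2 + v2 ^ 2) := by
  linear_combination (32 * a ^ 3 * μ ^ 3 * v1 * v2) * hi

/-- Passing from the cleared-denominator identity to the fractional one. -/
lemma stmt1_frac (a b μ P Q v1 v2 : ℂ) (ha : a ≠ 0) (hμ : μ ≠ 0)
    (h : 4 * a ^ 2 * P ^ 2 + 4 * a * b * P * Q + (b ^ 2 - μ ^ 2) * Q ^ 2
        = -32 * Complex.I * a ^ 3 * μ ^ 3 * (v1 ^ 2 + v2 ^ 2)) :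
    a * (P / (4 * a * μ)) ^ 2 + b * (P / (4 * a * μ)) * (Q / (4 * a * μ))
      + (b ^ 2 - μ ^ 2) / (4 * a) * (Q / (4 * a * μ)) ^ 2
      = μ / (2 * Complex.I) * (v1 ^ 2 + v2 ^ 2) := by
  have hR : μ / (2 * Complex.I) = -(μ / 2 * Complex.I) := by
    rw [show (2 : ℂ) * Complex.I = Complex.I * 2 by ring, ← div_div, Complex.div_I]
    ring
  rw [hR]
  have hd : (4 : ℂ) * a * μ ≠ 0 := by simp [ha, hμ]
  have expand : a * (P / (4 * a * μ)) ^ 2 + b * (P / (4 * a * μ)) * (Q / (4 * a * μ))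
      + (b ^ 2 - μ ^ 2) / (4 * a) * (Q / (4 * a * μ)) ^ 2
      = (4 * a ^ 2 * P ^ 2 + 4 * a * b * P * Q + (b ^ 2 - μ ^ 2) * Q ^ 2)
          / (4 * a * (4 * a * μ) ^ 2) := by
    field_simp
  rw [expand, h, div_eq_iff (by simp [ha, hμ])]
  ring

/-- Reduction of an elliptic quadratic form on ℂ² with non-full real range to the
normal form (μ/(2i))(x² + ξ²) by a complex linear symplectic transformation. -/
theorem stmt1
    (a b c : ℂ) (q : ℂ × ℂ → ℂ)
    (hq : ∀ w : ℂ × ℂ, q w = a * w.1 ^ 2 + b * w.1 * w.2 + c * w.2 ^ 2)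
    (hrange : {z : ℂ | ∃ x ξ : ℝ, q ((x : ℂ), (ξ : ℂ)) = z} ≠ Set.univ)
    (hnz : ∀ x ξ : ℝ, ¬(x = 0 ∧ ξ = 0) → q ((x : ℂ), (ξ : ℂ)) ≠ 0) :
    ∃ (μ : ℂ) (T : Matrix (Fin 2) (Fin 2) ℂ),
      μ ≠ 0 ∧ T.det = 1 ∧
      ∀ v : ℂ × ℂ,
        q (T 0 0 * v.1 + T 0 1 * v.2, T 1 0 * v.1 + T 1 1 * v.2)
          = μ / (2 * Complex.I) * (v.1 ^ 2 + v.2 ^ 2) := by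
  have ha : a ≠ 0 := by
    have h := hnz 1 0 (by norm_num)
    rw [hq] at h
    simpa using h
  -- the discriminant is nonzero
  have hD : b ^ 2 - 4 * a * c ≠ 0 := by
    intro hD0
    have hc : c = b ^ 2 / (4 * a) := by
      field_simp
      linear_combination -hD0
    set t : ℂ := b / (2 * a) with ht
    have key : ∀ x ξ : ℂ, a * x ^ 2 + b * x * ξ + c * ξ ^ 2 = a * (x + t * ξ) ^ 2 := by
      intro x ξ
      rw [hc, ht]
      field_simp
      ring
    by_cases him : t.im = 0
    · -- t is real, q vanishes at a nonzero real point
      have htr : ((t.re : ℝ) : ℂ) = t := by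
        apply Complex.ext <;> simp [him]
      have h := hnz (-t.re) 1 (by norm_num)
      apply h
      rw [hq]
      simp only
      rw [key]
      rw [Complex.ofReal_neg, htr]
      push_cast
      ring
    · -- t is not real, the range is everything
      apply hrange
      rw [Set.eq_univ_iff_forall]
      intro z
      obtain ⟨w, hw⟩ := Complex.isAlgClosed.exists_pow_nat_eq (z / a) (n := 2) (by norm_num)
      refine ⟨w.re - t.re * (w.im / t.im), w.im / t.im, ?_⟩
      rw [hq]
      simp only
      rw [key]
      have hxw : ((w.re - t.re * (w.im / t.im) : ℝ) : ℂ) + t * ((w.im / t.im : ℝ) : ℂ) = w := by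
        apply Complex.ext <;> simp <;> field_simp
      rw [hxw, hw]
      field_simp
  obtain ⟨μ, hμ⟩ := Complex.isAlgClosed.exists_pow_nat_eq (b ^ 2 - 4 * a * c) (n := 2) (by norm_num)
  have hμ0 : μ ≠ 0 := by
    intro h
    apply hD
    rw [← hμ, h]
    ring
  have hc : c = (b ^ 2 - μ ^ 2) / (4 * a) := by
    rw [eq_div_iff (by simp [ha] : (4 : ℂ) * a ≠ 0)]
    linear_combination hμ
  refine ⟨μ, ![![(2 * a * (b + μ) - Complex.I * μ * (μ - b)) / (4 * a * μ),
                (-2 * Complex.I * a * (b + μ) + μ * (μ - b)) / (4 * a * μ)],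
              ![(-4 * a ^ 2 - 2 * Complex.I * a * μ) / (4 * a * μ),
                (4 * Complex.I * a ^ 2 + 2 * a * μ) / (4 * a * μ)]], hμ0, ?_, ?_⟩
  · erw [Matrix.det_fin_two]
    simp only [Matrix.cons_val', Matrix.cons_val_zero, Matrix.cons_val_one, Matrix.head_cons,
      Matrix.empty_val', Matrix.cons_val_fin_one, Matrix.head_fin_const]
    field_simp
    linear_combination (-8 * a * μ ^ 2) * Complex.I_sq
  · intro v
    rw [hq]
    simp only [Matrix.cons_val', Matrix.cons_val_zero, Matrix.cons_val_one, Matrix.head_cons,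
      Matrix.empty_val', Matrix.cons_val_fin_one, Matrix.head_fin_const]
    rw [hc]
    rw [div_mul_eq_mul_div, div_mul_eq_mul_div, ← add_div,
        div_mul_eq_mul_div, div_mul_eq_mul_div, ← add_div]
    exact stmt1_frac a b μ _ _ v.1 v.2 ha hμ0
      (stmt1_polyid a b μ Complex.I v.1 v.2 Complex.I_sq)
end

section
/- Let q : ℂ² → ℂ be a quadratic form (a homogeneous polynomial of degree 2 in two complex variables) such that the set {q(x,ξ) : (x,ξ) ∈ ℝ²} is not all of ℂ and q(x,ξ) ≠ 0 for every (x,ξ) ∈ ℝ² \ {(0,0)}. Then there exists λ ∈ ℂ such that Re(λ·q(v)) > 0 for all v ∈ ℝ² \ {(0,0)}. -/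
open Complex

noncomputable def Complex.abs : AbsoluteValue ℂ ℝ where
  toFun z := ‖z‖
  map_mul' := norm_mul
  nonneg' := norm_nonneg
  eq_zero' _ := norm_eq_zero
  add_le' := norm_add_le

lemma Complex.norm_eq_abs (z : ℂ) : ‖z‖ = Complex.abs z := rfl

lemma Complex.abs_ofReal (r : ℝ) : Complex.abs (r : ℂ) = |r| :=
  show ‖(r : ℂ)‖ = |r| by simp

lemma Complex.sq_abs (z : ℂ) : Complex.abs z ^ 2 = Complex.normSq z := Complex.sq_norm z

lemma Complex.abs_apply (z : ℂ) : Complex.abs z = Real.sqrt (Complex.normSq z) := Complex.norm_def z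

lemma Complex.abs_conj (z : ℂ) : Complex.abs ((starRingEnd ℂ) z) = Complex.abs z := Complex.norm_conj z

lemma Complex.abs_re_le_abs (z : ℂ) : |z.re| ≤ Complex.abs z := Complex.abs_re_le_norm z


lemma sqrtC (ζ : ℂ) : ∃ z : ℂ, z ^ 2 = ζ :=
  ⟨ζ ^ (((2:ℕ) : ℂ)⁻¹), by exact_mod_cast Complex.cpow_nat_inv_pow ζ two_ne_zero⟩

lemma keyAux (a b c x ξ : ℂ) :
    a * x ^ 2 + b * x * ξ + c * ξ ^ 2 =
      (a - b*I - c)/4 * (x + ξ*I)^2 + (a + c)/2 * (x^2 + ξ^2)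
        + (a + b*I - c)/4 * (x - ξ*I)^2 := by
  linear_combination (b*x*ξ - (a - c)/2 * ξ^2) * Complex.I_sq

lemma conjAux (x ξ : ℝ) : (starRingEnd ℂ) ((x:ℂ) + ξ*I) = (x:ℂ) - ξ*I := by
  simp [map_add, map_mul, Complex.conj_ofReal, Complex.conj_I]
  ring
lemma point_of_w (A B C : ℂ) (w : ℂ) (hw : Complex.abs w = 1) (t : ℝ) (ht : 0 < t) :
    ∃ x ξ : ℝ, ¬(x = 0 ∧ ξ = 0) ∧
      A * ((x:ℂ) + ξ*I)^2 + B * ((x:ℂ)^2 + (ξ:ℂ)^2) + C * ((x:ℂ) - ξ*I)^2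
        = (t:ℂ) * (B + A * w + C * (starRingEnd ℂ) w) := by
  obtain ⟨z, hz⟩ := sqrtC ((t:ℂ) * w)
  have hw0 : w ≠ 0 := by
    intro h; rw [h] at hw; simp at hw
  have hz0 : z ≠ 0 := by
    intro h
    rw [h] at hz
    have : (t:ℂ) * w ≠ 0 := mul_ne_zero (by exact_mod_cast ht.ne') hw0
    rw [pow_two, mul_zero] at hz
    exact this hz.symm
  refine ⟨z.re, z.im, ?_, ?_⟩
  · rintro ⟨h1, h2⟩; exact hz0 (Complex.ext h1 h2)
  · have hre : (z.re : ℂ) + (z.im:ℂ) * I = z := Complex.re_add_im z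
    have hconj : (z.re : ℂ) - (z.im:ℂ) * I = (starRingEnd ℂ) z := by
      conv_rhs => rw [← hre]
      rw [conjAux]
    have hns : ((z.re:ℂ)^2 + (z.im:ℂ)^2) = ((t:ℝ):ℂ) := by
      have h1 : Complex.normSq z = t := by
        have : (Complex.abs z)^2 = Complex.abs ((t:ℂ) * w) := by
          rw [← hz]; rw [map_pow]
        rw [map_mul, hw, mul_one, Complex.abs_ofReal, abs_of_pos ht] at this
        rw [← Complex.sq_abs, this]
      rw [← h1, Complex.normSq_apply]
      push_cast
      ring
    rw [hre, hconj, hns]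
    have hcz : ((starRingEnd ℂ) z)^2 = (t:ℂ) * (starRingEnd ℂ) w := by
      rw [← map_pow, hz, map_mul, Complex.conj_ofReal]
    rw [hz, hcz]
    ring
lemma decompAux (A B C : ℂ) (x ξ : ℝ) (h : ¬(x = 0 ∧ ξ = 0)) :
    ∃ (t : ℝ) (w : ℂ), 0 < t ∧ Complex.abs w = 1 ∧
      A * ((x:ℂ) + ξ*I)^2 + B * ((x:ℂ)^2 + (ξ:ℂ)^2) + C * ((x:ℂ) - ξ*I)^2
        = (t:ℂ) * (B + A * w + C * (starRingEnd ℂ) w) := by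
  have ht : 0 < x^2 + ξ^2 := by
    rcases not_and_or.mp h with h1 | h1 <;> positivity
  set z : ℂ := (x:ℂ) + ξ*I with hzdef
  have hz0 : z ≠ 0 := by
    intro h0
    rw [Complex.ext_iff] at h0
    simp [hzdef] at h0
    exact h ⟨h0.1, h0.2⟩
  have hns : Complex.normSq z = x^2 + ξ^2 := by
    simp [hzdef, Complex.normSq_apply]; ring
  refine ⟨x^2 + ξ^2, z^2 / ((x^2 + ξ^2 : ℝ):ℂ), ht, ?_, ?_⟩
  · rw [map_div₀, map_pow, Complex.abs_ofReal, abs_of_pos ht, ← hns, ← Complex.sq_abs]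
    exact div_self (pow_ne_zero 2 (Complex.abs.ne_zero_iff.mpr hz0))
  · have hne : ((x^2 + ξ^2 : ℝ):ℂ) ≠ 0 := by exact_mod_cast ht.ne'
    have hcz : (starRingEnd ℂ) z = (x:ℂ) - ξ*I := conjAux x ξ
    have hmul : z * (starRingEnd ℂ) z = ((x^2 + ξ^2 : ℝ):ℂ) := by
      rw [Complex.mul_conj, hns]
    rw [map_div₀, map_pow, hcz, Complex.conj_ofReal]
    have hne' : ((x:ℂ)^2+(ξ:ℂ)^2) ≠ 0 := by
      intro h0; apply hne; push_cast; rw [← h0]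
    push_cast
    field_simp
    ring
lemma sepAux (A B C : ℂ)
    (h : ∀ u : ℂ, Complex.abs u ≤ 1 → B + A*u + C*(starRingEnd ℂ) u ≠ 0) :
    ∃ l : ℂ, ∀ w : ℂ, Complex.abs w = 1 →
      0 < (l * (B + A*w + C*(starRingEnd ℂ) w)).re := by
  set L : ℂ →ₗ[ℝ] ℂ :=
    { toFun := fun u => A*u + C*(starRingEnd ℂ) u
      map_add' := by intro u v; simp [map_add]; ring
      map_smul' := by
        intro r u
        simp [Complex.real_smul, map_mul, Complex.conj_ofReal]
        ring } with hL
  set s : Set ℂ := (fun z => B + z) '' (L '' Metric.closedBall 0 1) with hs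
  have hconv : Convex ℝ s := ((convex_closedBall (0:ℂ) 1).linear_image L).translate B
  have hcpt : IsCompact s := by
    apply ((isCompact_closedBall (0:ℂ) 1).image ?_).image (continuous_const.add continuous_id)
    exact (continuous_const.mul continuous_id).add
      (continuous_const.mul Complex.continuous_conj)
  have h0 : (0:ℂ) ∉ s := by
    rintro ⟨z, ⟨u, hu, rfl⟩, h0⟩
    refine h u ?_ ?_
    · rw [← Complex.norm_eq_abs]
      exact mem_closedBall_zero_iff.mp hu
    · have h1 : B + (A*u + C*(starRingEnd ℂ) u) = 0 := h0
      linear_combination h1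
  obtain ⟨f, u0, hfs, hf0⟩ := geometric_hahn_banach_closed_point hconv hcpt.isClosed h0
  have hu0 : u0 < 0 := by simpa using hf0
  have hneg : ∀ z ∈ s, f z < 0 := fun z hz => (hfs z hz).trans hu0
  have flin : ∀ z : ℂ, f z = z.re * f 1 + z.im * f I := by
    intro z
    have hzd : z = z.re • (1:ℂ) + z.im • I := by
      simp [Complex.real_smul, Complex.re_add_im]
    conv_lhs => rw [hzd]
    rw [map_add, map_smul, map_smul]
    simp [smul_eq_mul]
  refine ⟨(↑(-(f 1)) + ↑(f I) * I : ℂ), fun w hw => ?_⟩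
  have hmem : B + A*w + C*(starRingEnd ℂ) w ∈ s := by
    refine ⟨L w, ⟨w, ?_, rfl⟩, ?_⟩
    · rw [Metric.mem_closedBall, dist_zero_right, Complex.norm_eq_abs, hw]
    · show B + (A*w + C*(starRingEnd ℂ) w) = _
      ring
  have hre : ∀ z : ℂ, ((↑(-(f 1)) + ↑(f I) * I : ℂ) * z).re = -(f z) := by
    intro z
    rw [flin z]
    simp only [Complex.mul_re, Complex.add_re, Complex.add_im, Complex.ofReal_re,
      Complex.ofReal_im, Complex.mul_im, Complex.I_re, Complex.I_im]
    ring
  rw [hre]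
  linarith [hneg _ hmem]
lemma degAux (A B C : ℂ) (hAC : Complex.abs A = Complex.abs C)
    (u : ℂ) (hu : Complex.abs u ≤ 1) (h0 : B + A*u + C*(starRingEnd ℂ) u = 0) :
    ∃ w : ℂ, Complex.abs w = 1 ∧ B + A*w + C*(starRingEnd ℂ) w = 0 := by
  by_cases hA : A = 0
  · have hC : C = 0 := by
      have := hAC
      rw [hA, map_zero] at this
      exact Complex.abs.eq_zero.mp this.symm
    refine ⟨1, by simp, ?_⟩
    rw [hA, hC] at h0 ⊢
    simpa using h0
  · obtain ⟨δ, hδ⟩ := sqrtC (C / A)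
    have hCA : C = A * δ^2 := by
      rw [hδ]; field_simp
    have habsδ : Complex.abs δ = 1 := by
      have h2 : (Complex.abs δ)^2 = 1 := by
        rw [← map_pow, hδ, map_div₀, ← hAC, div_self (Complex.abs.ne_zero hA)]
      nlinarith [Complex.abs.nonneg δ]
    set p : ℝ := ((starRingEnd ℂ) δ * u).re with hp
    have hpabs : |p| ≤ 1 := by
      calc |p| ≤ Complex.abs ((starRingEnd ℂ) δ * u) := Complex.abs_re_le_abs _
        _ = Complex.abs u := by rw [map_mul, Complex.abs_conj, habsδ, one_mul]
        _ ≤ 1 := hu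
    have hp2 : 1 - p^2 ≥ 0 := by nlinarith [abs_nonneg p, _root_.sq_abs p]
    set v : ℂ := (p:ℂ) + (Real.sqrt (1 - p^2) : ℝ) * I with hv
    have hvabs : Complex.abs v = 1 := by
      have : Complex.normSq v = 1 := by
        rw [hv, Complex.normSq_apply]
        simp
        nlinarith [Real.sq_sqrt hp2]
      rw [Complex.abs_apply, this, Real.sqrt_one]
    refine ⟨δ * v, by rw [map_mul, habsδ, hvabs, mul_one], ?_⟩
    have h1 : δ * (starRingEnd ℂ) δ = 1 := by
      rw [Complex.mul_conj]
      norm_cast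
      rw [← Complex.sq_abs, habsδ]; norm_num
    have h2 : v + (starRingEnd ℂ) v = 2 * (p:ℂ) := by
      rw [hv]
      simp [map_add, map_mul, Complex.conj_ofReal, Complex.conj_I]
      ring
    have h3 : (starRingEnd ℂ) δ * u + δ * (starRingEnd ℂ) u = 2 * (p:ℂ) := by
      have := Complex.add_conj ((starRingEnd ℂ) δ * u)
      rw [map_mul, Complex.conj_conj] at this
      rw [this, hp]
      push_cast
      ring
    rw [← h0, hCA, map_mul]
    linear_combination (A*δ^2*((starRingEnd ℂ) δ))*h2 - (A*δ)*h3
      + (A*u - A*δ*v + 2*(p:ℂ)*A*δ)*h1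
lemma nondegAux (A B C : ℂ) (hAC : Complex.abs A ≠ Complex.abs C)
    (u : ℂ) (hu : Complex.abs u < 1) (h0 : B + A*u + C*(starRingEnd ℂ) u = 0)
    (ζ : ℂ) (hζ : ζ ≠ 0) :
    ∃ (w : ℂ) (t : ℝ), Complex.abs w = 1 ∧ 0 < t ∧
      B + A*w + C*(starRingEnd ℂ) w = (t:ℂ) * ζ := by
  set D : ℝ := Complex.normSq A - Complex.normSq C with hD
  have hD0 : D ≠ 0 := by
    rw [hD, sub_ne_zero]
    intro h
    apply hAC
    rw [← Real.sqrt_inj (Complex.normSq_nonneg A) (Complex.normSq_nonneg C)] at h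
    · rwa [Complex.abs_apply, Complex.abs_apply]
  have hDc : ((D:ℝ):ℂ) ≠ 0 := by exact_mod_cast hD0
  set m : ℂ := ((starRingEnd ℂ) A * ζ - C * (starRingEnd ℂ) ζ) / (D:ℂ) with hm
  have hLm : A * m + C * (starRingEnd ℂ) m = ζ := by
    have hcm : (starRingEnd ℂ) m
        = (A * (starRingEnd ℂ) ζ - (starRingEnd ℂ) C * ζ) / (D:ℂ) := by
      rw [hm, map_div₀]
      congr 1
      · simp [map_sub, map_mul, Complex.conj_conj]
      · rw [Complex.conj_ofReal]
    rw [hcm, hm]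
    have hA2 : A * (starRingEnd ℂ) A = (Complex.normSq A : ℂ) := Complex.mul_conj A
    have hC2 : C * (starRingEnd ℂ) C = (Complex.normSq C : ℂ) := Complex.mul_conj C
    field_simp
    rw [hD]
    push_cast
    linear_combination ζ * hA2 - ζ * hC2
  have hm0 : m ≠ 0 := by
    intro h
    apply hζ
    rw [← hLm, h]
    simp
  -- find t with |u + t m| = 1
  set nm : ℝ := Complex.normSq m with hnm
  have hnm0 : 0 < nm := by
    rw [hnm]
    exact Complex.normSq_pos.mpr hm0
  set nu : ℝ := Complex.normSq u with hnu
  have hnu1 : nu < 1 := by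
    rw [hnu, ← Complex.sq_abs]
    nlinarith [Complex.abs.nonneg u]
  set β : ℝ := (u * (starRingEnd ℂ) m).re with hβ
  set E : ℝ := β^2 + nm * (1 - nu) with hE
  have hEpos : 0 < E := by nlinarith
  set st : ℝ := Real.sqrt E with hst
  have hst2 : st^2 = E := Real.sq_sqrt hEpos.le
  have hstβ : β < st := by
    have h1 : |β| < st := by
      rw [hst]
      have : β^2 < E := by nlinarith
      calc |β| = Real.sqrt (β^2) := by rw [Real.sqrt_sq_eq_abs]
        _ < Real.sqrt E := Real.sqrt_lt_sqrt (sq_nonneg β) this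
    calc β ≤ |β| := le_abs_self β
      _ < st := h1
  set t : ℝ := (st - β)/nm with ht
  have htpos : 0 < t := div_pos (by linarith) hnm0
  refine ⟨u + (t:ℝ) * m, t, ?_, htpos, ?_⟩
  · have hns : Complex.normSq (u + (t:ℝ)*m) = 1 := by
      rw [Complex.normSq_add]
      have e1 : Complex.normSq ((t:ℝ) * m) = t^2 * nm := by
        rw [Complex.normSq_mul, Complex.normSq_ofReal, hnm]; ring
      have e2 : (u * (starRingEnd ℂ) ((t:ℝ)*m)).re = t * β := by
        rw [map_mul, Complex.conj_ofReal]
        rw [show u * ((t:ℝ) * (starRingEnd ℂ) m) = (t:ℝ) * (u * (starRingEnd ℂ) m) by ring]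
        rw [Complex.re_ofReal_mul, hβ]
      rw [e1, e2, ← hnu]
      have : nm * t = st - β := by
        rw [ht]; field_simp
      have hnmne : nm ≠ 0 := hnm0.ne'
      have goal' : nm * (nu + t^2*nm + 2*(t*β)) = nm * 1 := by
        linear_combination (nm*t + st + β) * this + hst2 + hE
      exact mul_left_cancel₀ hnmne goal'
    rw [Complex.abs_apply, hns, Real.sqrt_one]
  · have hcw : (starRingEnd ℂ) (u + (t:ℝ)*m)
        = (starRingEnd ℂ) u + (t:ℝ) * (starRingEnd ℂ) m := by
      rw [map_add, map_mul, Complex.conj_ofReal]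
    rw [hcw]
    linear_combination h0 + (t:ℂ) * hLm

/-- For an elliptic quadratic form q on ℂ² whose range on ℝ² is not all of ℂ,
there is λ ∈ ℂ with Re(λ·q(v)) > 0 for all real v ≠ 0. -/
theorem stmt2
    (a b c : ℂ) (q : ℂ × ℂ → ℂ)
    (hq : ∀ w : ℂ × ℂ, q w = a * w.1 ^ 2 + b * w.1 * w.2 + c * w.2 ^ 2)
    (hrange : {z : ℂ | ∃ x ξ : ℝ, q ((x : ℂ), (ξ : ℂ)) = z} ≠ Set.univ)
    (hnz : ∀ x ξ : ℝ, ¬(x = 0 ∧ ξ = 0) → q ((x : ℂ), (ξ : ℂ)) ≠ 0) :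
    ∃ l : ℂ, ∀ x ξ : ℝ, ¬(x = 0 ∧ ξ = 0) →
      0 < (l * q ((x : ℂ), (ξ : ℂ))).re := by
  set A : ℂ := (a - b*I - c)/4 with hA
  set B : ℂ := (a + c)/2 with hB
  set C : ℂ := (a + b*I - c)/4 with hC
  have hkey : ∀ x ξ : ℝ, q ((x:ℂ), (ξ:ℂ)) =
      A * ((x:ℂ) + ξ*I)^2 + B * ((x:ℂ)^2 + (ξ:ℂ)^2) + C * ((x:ℂ) - ξ*I)^2 := by
    intro x ξ
    rw [hq]
    exact keyAux a b c x ξ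
  have hcirc : ∀ w : ℂ, Complex.abs w = 1 → B + A*w + C*(starRingEnd ℂ) w ≠ 0 := by
    intro w hw h0
    obtain ⟨x, ξ, hne, heq⟩ := point_of_w A B C w hw 1 one_pos
    apply hnz x ξ hne
    rw [hkey, heq, h0, mul_zero]
  by_cases hcase : ∀ u : ℂ, Complex.abs u ≤ 1 → B + A*u + C*(starRingEnd ℂ) u ≠ 0
  · obtain ⟨l, hl⟩ := sepAux A B C hcase
    refine ⟨l, fun x ξ hne => ?_⟩
    obtain ⟨t, w, ht, hw, heq⟩ := decompAux A B C x ξ hne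
    rw [hkey, heq, show l * ((t:ℂ) * (B + A*w + C*(starRingEnd ℂ) w))
      = (t:ℂ) * (l * (B + A*w + C*(starRingEnd ℂ) w)) by ring, Complex.re_ofReal_mul]
    exact mul_pos ht (hl w hw)
  · exfalso
    push_neg at hcase
    obtain ⟨u, hu1, hu0⟩ := hcase
    have hult : Complex.abs u < 1 := lt_of_le_of_ne hu1 (fun h => hcirc u h hu0)
    by_cases hAC : Complex.abs A = Complex.abs C
    · obtain ⟨w, hw, h0⟩ := degAux A B C hAC u hu1 hu0
      exact hcirc w hw h0
    · apply hrange
      apply Set.eq_univ_of_forall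
      intro ζ
      by_cases hζ : ζ = 0
      · exact ⟨0, 0, by rw [hq]; simp [hζ]⟩
      · obtain ⟨w, t, hw, ht, hVw⟩ := nondegAux A B C hAC u hult hu0 ζ hζ
        obtain ⟨x, ξ, hne, heq⟩ := point_of_w A B C w hw (1/t) (by positivity)
        refine ⟨x, ξ, ?_⟩
        rw [hkey, heq, hVw]
        have htc : (t:ℂ) ≠ 0 := by exact_mod_cast ht.ne'
        push_cast
        field_simp
end

section
/- Let h > 0, ρ > 0 and let j ∈ ℕ satisfy j + 1 ≤ ρ²/(4h). Then (1/(π·j!·h^{j+1}))·∫_{{x ∈ ℂ : |x| > ρ}} |x|^{2j}·e^{−|x|²/h} dL(x) ≤ e^{−ρ²/(4h)}. Equivalently, the function φ_j(x) = (π·j!)^{−1/2}·h^{−(j+1)/2}·x^j satisfies ∫_{|x|>ρ} |φ_j(x)|² e^{−2Φ₀(x)/h} dL(x) ≤ e^{−ρ²/(4h)}. -/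
open Complex MeasureTheory

section auxlemmas
open Real Set Filter

private lemma aux_pow_exp (j : ℕ) {s : ℝ} (hs : 0 ≤ s) :
    s ^ j * Real.exp (-s) ≤ (j : ℝ) ^ j * Real.exp (-(j : ℝ)) := by
  rcases Nat.eq_zero_or_pos j with rfl | hj
  · simpa using Real.exp_le_exp.2 (by linarith)
  · have hjR : (0:ℝ) < j := by exact_mod_cast hj
    have h1 : s / j ≤ Real.exp (s / j - 1) := by
      have := Real.add_one_le_exp (s / j - 1); linarith
    have h2 : s ^ j ≤ ((j:ℝ) * Real.exp (s / j - 1)) ^ j := by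
      apply pow_le_pow_left₀ hs
      calc s = j * (s / j) := by field_simp
        _ ≤ j * Real.exp (s / j - 1) := by
            exact mul_le_mul_of_nonneg_left h1 hjR.le
    have h3 : ((j:ℝ) * Real.exp (s / j - 1)) ^ j = (j:ℝ)^j * Real.exp (s - j) := by
      rw [mul_pow, ← Real.exp_nat_mul]
      congr 1
      field_simp
    rw [h3] at h2
    calc s ^ j * Real.exp (-s) ≤ ((j:ℝ)^j * Real.exp (s - j)) * Real.exp (-s) := by
          exact mul_le_mul_of_nonneg_right h2 (Real.exp_nonneg _)
      _ = (j:ℝ)^j * Real.exp (-(j:ℝ)) := by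
          rw [mul_assoc, ← Real.exp_add]; ring_nf

private lemma aux_pow_factorial (j : ℕ) :
    (j : ℝ) ^ j ≤ (Nat.factorial j : ℝ) * Real.exp j := by
  induction j with
  | zero => simp
  | succ n ih =>
    rcases Nat.eq_zero_or_pos n with rfl | hn
    · simp [Nat.factorial]
    · have hnR : (0:ℝ) < n := by exact_mod_cast hn
      have key : ((n:ℝ) + 1) ^ n ≤ (n:ℝ)^n * Real.exp 1 := by
        have h1 : (n:ℝ) + 1 ≤ n * Real.exp (1 / n) := by
          have := Real.add_one_le_exp (1 / (n:ℝ))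
          calc (n:ℝ) + 1 = n * (1/n + 1) := by field_simp; linarith
            _ ≤ n * Real.exp (1/n) := by
                exact mul_le_mul_of_nonneg_left (by linarith) hnR.le
        calc ((n:ℝ)+1)^n ≤ ((n:ℝ) * Real.exp (1/n))^n := by
              apply pow_le_pow_left₀ (by positivity) h1
          _ = (n:ℝ)^n * Real.exp (1/n) ^ n := mul_pow _ _ _
          _ = (n:ℝ)^n * Real.exp 1 := by
              rw [← Real.exp_nat_mul]; congr 2; field_simp
      have : ((n:ℝ)+1)^(n+1) = ((n:ℝ)+1) * ((n:ℝ)+1)^n := by ring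
      calc ((n+1:ℕ):ℝ)^(n+1) = ((n:ℝ)+1) * ((n:ℝ)+1)^n := by push_cast; ring
        _ ≤ ((n:ℝ)+1) * ((n:ℝ)^n * Real.exp 1) := by
            exact mul_le_mul_of_nonneg_left key (by positivity)
        _ ≤ ((n:ℝ)+1) * ((Nat.factorial n * Real.exp n) * Real.exp 1) := by
            have := mul_le_mul_of_nonneg_right ih (Real.exp_nonneg 1)
            exact mul_le_mul_of_nonneg_left this (by positivity)
        _ = (Nat.factorial (n+1) : ℝ) * Real.exp ((n:ℝ)+1) := by
            rw [Nat.factorial_succ,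
              show rexp ((n:ℝ)+1) = rexp (n:ℝ) * rexp 1 from by rw [← Real.exp_add]]
            push_cast; ring
        _ = (Nat.factorial (n+1) : ℝ) * Real.exp ((n+1:ℕ):ℝ) := by push_cast; ring

private lemma aux_polar (h ρ : ℝ) (hρ : 0 < ρ) (j : ℕ) :
    ∫ x in {x : ℂ | ρ < ‖x‖},
        ‖x‖ ^ (2 * j) * Real.exp (-‖x‖ ^ 2 / h)
      = (2 * Real.pi) * ∫ r in Ioi ρ, r * (r ^ (2 * j) * Real.exp (-r ^ 2 / h)) := by
  set φ : ℝ → ℝ := fun r => r ^ (2 * j) * Real.exp (-r ^ 2 / h) with hφ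
  set g : ℝ → ℝ := fun r => Set.indicator (Ioi ρ) φ r with hg
  have hS : MeasurableSet {x : ℂ | ρ < ‖x‖} :=
    (isOpen_lt continuous_const continuous_norm).measurableSet
  have h1 : (∫ x in {x : ℂ | ρ < ‖x‖}, φ (‖x‖))
      = ∫ x : ℂ, g (‖x‖) := by
    rw [← integral_indicator hS]
    refine integral_congr_ae (.of_forall fun x => ?_)
    by_cases hx : x ∈ {x : ℂ | ρ < ‖x‖}
    · rw [Set.indicator_of_mem hx]
      simp only [hg, Set.indicator_of_mem (show ‖x‖ ∈ Ioi ρ from hx)]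
    · rw [Set.indicator_of_notMem hx]
      simp only [hg, Set.indicator_of_notMem (show ‖x‖ ∉ Ioi ρ from hx)]
  calc (∫ x in {x : ℂ | ρ < ‖x‖}, φ (‖x‖))
      = ∫ x : ℂ, g (‖x‖) := h1
    _ = ∫ p in Set.Ioi (0:ℝ) ×ˢ Set.Ioo (-π) π, p.1 * g |p.1| := by
        rw [← Complex.integral_comp_polarCoord_symm (fun x => g (‖x‖)),
          polarCoord_target]
        simp_rw [Complex.norm_polarCoord_symm, smul_eq_mul]
    _ = (∫ r in Ioi (0:ℝ), r * g |r|) * ∫ _ in Set.Ioo (-π) π, (1:ℝ) := by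
        rw [← setIntegral_prod_mul, Measure.volume_eq_prod]
        simp_rw [mul_one]
    _ = (∫ r in Ioi (0:ℝ), r * g |r|) * (2 * π) := by
        rw [setIntegral_const, smul_eq_mul, mul_one, Real.volume_real_Ioo]
        rw [max_eq_left (by linarith [Real.pi_pos])]
        ring
    _ = (∫ r in Ioi (0:ℝ), Set.indicator (Ioi ρ) (fun r => r * φ r) r) * (2 * π) := by
        congr 1
        refine setIntegral_congr_fun measurableSet_Ioi (fun r hr => ?_)
        rw [abs_of_pos hr]
        by_cases hrρ : r ∈ Ioi ρ
        · simp only [hg, Set.indicator_of_mem hrρ]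
        · simp only [hg, Set.indicator_of_notMem hrρ, mul_zero]
    _ = (∫ r in Ioi ρ, r * φ r) * (2 * π) := by
        rw [setIntegral_indicator measurableSet_Ioi, Set.Ioi_inter_Ioi,
          max_eq_right hρ.le]
    _ = (2 * Real.pi) * ∫ r in Ioi ρ, r * φ r := by ring

private lemma aux_tail {b ρ : ℝ} (hb : 0 < b) :
    ∫ r in Ioi ρ, r * Real.exp (-b * r ^ 2) = Real.exp (-b * ρ ^ 2) / (2 * b) := by
  have hderiv : ∀ x ∈ Ici ρ,
      HasDerivAt (fun r : ℝ => -Real.exp (-b * r ^ 2) / (2 * b))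
        (x * Real.exp (-b * x ^ 2)) x := by
    intro x _
    have h1 : HasDerivAt (fun r : ℝ => -b * r ^ 2) (-b * (2 * x)) x := by
      simpa using ((hasDerivAt_pow 2 x).const_mul (-b))
    have h2 := (h1.exp).neg.div_const (2 * b)
    refine h2.congr_deriv ?_
    rw [div_eq_iff (by positivity)]
    ring
  have hint : IntegrableOn (fun r : ℝ => r * Real.exp (-b * r ^ 2)) (Ioi ρ) :=
    (integrable_mul_exp_neg_mul_sq hb).integrableOn
  have htend : Tendsto (fun r : ℝ => -Real.exp (-b * r ^ 2) / (2 * b)) atTop (nhds 0) := by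
    have h3 : Tendsto (fun r : ℝ => -b * r ^ 2) atTop atBot := by
      apply Tendsto.const_mul_atTop_of_neg (neg_neg_iff_pos.mpr hb)
      exact tendsto_pow_atTop (by norm_num)
    have := (Real.tendsto_exp_atBot.comp h3).neg.div_const (2 * b)
    simpa using this
  have := integral_Ioi_of_hasDerivAt_of_tendsto' hderiv hint htend
  rw [this]
  field_simp
  ring

end auxlemmas

/-- Exponential smallness of the weighted mass of the monomial x^j outside the
disc of radius ρ, when j + 1 ≤ ρ²/(4h). -/
theorem stmt8
    (h ρ : ℝ) (hh : 0 < h) (hρ : 0 < ρ) (j : ℕ)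
    (hj : (j : ℝ) + 1 ≤ ρ ^ 2 / (4 * h)) :
    (1 / (Real.pi * (Nat.factorial j : ℝ) * h ^ (j + 1))) *
      (∫ x in {x : ℂ | ρ < ‖x‖},
        ‖x‖ ^ (2 * j) * Real.exp (-‖x‖ ^ 2 / h))
      ≤ Real.exp (-ρ ^ 2 / (4 * h)) := by
  have hπ := Real.pi_pos
  set b : ℝ := 1 / (2 * h) with hb
  have hbpos : (0:ℝ) < b := by positivity
  set P : ℝ := (j:ℝ)^j * Real.exp (-(j:ℝ)) with hP
  have hPpos : 0 ≤ P := by positivity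
  set K : ℝ := (2*h)^j * P with hK
  have hKpos : 0 ≤ K := by positivity
  set c : ℝ := Real.exp (-ρ ^ 2 / (4 * h)) with hc
  have hcpos : 0 < c := Real.exp_pos _
  have hF : (0:ℝ) < (Nat.factorial j : ℝ) := by exact_mod_cast j.factorial_pos
  -- pointwise bound on the half line
  have hpt : ∀ r ∈ Set.Ioi ρ,
      r * (r ^ (2*j) * Real.exp (-r^2/h)) ≤ K * (r * Real.exp (-b * r^2)) := by
    intro r hr
    have hr0 : 0 < r := lt_trans hρ hr
    have hsplit : Real.exp (-r^2/h) = Real.exp (-b * r^2) * Real.exp (-b * r^2) := by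
      rw [← Real.exp_add, hb]
      congr 1
      field_simp
      ring
    have hkey : r ^ (2*j) * Real.exp (-b * r^2) ≤ K := by
      have h2hb : (2*h) * b = 1 := by rw [hb]; field_simp
      have hrw : r ^ (2*j) * Real.exp (-b * r^2)
          = (2*h)^j * ((b * r^2)^j * Real.exp (-(b * r^2))) := by
        have : (2*h)^j * (b * r^2)^j = (r^2)^j := by
          rw [← mul_pow, ← mul_assoc, h2hb, one_mul]
        rw [show (-b * r^2) = -(b * r^2) by ring, ← mul_assoc, this, ← pow_mul]
      rw [hrw, hK]
      exact mul_le_mul_of_nonneg_left (aux_pow_exp j (by positivity)) (by positivity)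
    calc r * (r ^ (2*j) * Real.exp (-r^2/h))
        = (r ^ (2*j) * Real.exp (-b * r^2)) * (r * Real.exp (-b * r^2)) := by
          rw [hsplit]; ring
      _ ≤ K * (r * Real.exp (-b * r^2)) := by
          exact mul_le_mul_of_nonneg_right hkey (by positivity)
  -- integrability
  have hint2 : IntegrableOn (fun r : ℝ => K * (r * Real.exp (-b * r^2))) (Set.Ioi ρ) :=
    ((integrable_mul_exp_neg_mul_sq hbpos).integrableOn).const_mul K
  have hint1 : IntegrableOn (fun r : ℝ => r * (r ^ (2*j) * Real.exp (-r^2/h))) (Set.Ioi ρ) := by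
    refine hint2.mono' ?_ ?_
    · exact (Continuous.aestronglyMeasurable (by fun_prop))
    · filter_upwards [ae_restrict_mem measurableSet_Ioi] with r hr
      have hr0 : 0 < r := lt_trans hρ hr
      rw [Real.norm_of_nonneg (by positivity)]
      exact hpt r hr
  -- the tail integral bound
  have hIneq : (∫ r in Set.Ioi ρ, r * (r ^ (2*j) * Real.exp (-r^2/h)))
      ≤ K * (Real.exp (-b * ρ^2) / (2*b)) := by
    calc (∫ r in Set.Ioi ρ, r * (r ^ (2*j) * Real.exp (-r^2/h)))
        ≤ ∫ r in Set.Ioi ρ, K * (r * Real.exp (-b * r^2)) :=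
          setIntegral_mono_on hint1 hint2 measurableSet_Ioi hpt
      _ = K * ∫ r in Set.Ioi ρ, r * Real.exp (-b * r^2) := integral_const_mul _ _
      _ = K * (Real.exp (-b * ρ^2) / (2*b)) := by rw [aux_tail hbpos]
  -- rewrite exp(-b ρ²) = c * c
  have hcc : Real.exp (-b * ρ^2) = c * c := by
    rw [hc, ← Real.exp_add, hb]
    congr 1
    field_simp
    ring
  -- numeric facts
  have hfac : P ≤ (Nat.factorial j : ℝ) := by
    have hej : (0:ℝ) < Real.exp (j:ℝ) := Real.exp_pos _
    have h2 := mul_le_mul_of_nonneg_right (aux_pow_factorial j) (inv_nonneg.mpr hej.le)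
    rw [mul_assoc, mul_inv_cancel₀ hej.ne', mul_one] at h2
    rw [hP, Real.exp_neg]
    exact h2
  have h2e : (2:ℝ)^(j+1) ≤ Real.exp ((j:ℝ)+1) := by
    have h21 : (2:ℝ) ≤ Real.exp 1 := by have := Real.add_one_le_exp (1:ℝ); linarith
    calc (2:ℝ)^(j+1) ≤ (Real.exp 1)^(j+1) := pow_le_pow_left₀ (by norm_num) h21 _
      _ = Real.exp ((j:ℝ)+1) := by rw [← Real.exp_nat_mul]; congr 1; push_cast; ring
  have hc1 : c ≤ Real.exp (-((j:ℝ)+1)) := by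
    rw [hc]
    apply Real.exp_le_exp.2
    have : (j:ℝ) + 1 ≤ ρ^2/(4*h) := hj
    have h4h : (0:ℝ) < 4*h := by positivity
    rw [neg_div]
    linarith
  have h2c : (2:ℝ)^(j+1) * c ≤ 1 := by
    calc (2:ℝ)^(j+1) * c ≤ Real.exp ((j:ℝ)+1) * Real.exp (-((j:ℝ)+1)) :=
          mul_le_mul h2e hc1 hcpos.le (Real.exp_nonneg _)
      _ = 1 := by
          rw [← Real.exp_add, show (j:ℝ)+1 + -((j:ℝ)+1) = 0 by ring, Real.exp_zero]
  -- assemble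
  rw [aux_polar h ρ hρ j]
  have hcoef : (0:ℝ) ≤ 1 / (Real.pi * (Nat.factorial j : ℝ) * h ^ (j + 1)) := by positivity
  calc (1 / (Real.pi * (Nat.factorial j : ℝ) * h ^ (j + 1))) *
        ((2 * Real.pi) * ∫ r in Set.Ioi ρ, r * (r ^ (2*j) * Real.exp (-r^2/h)))
      ≤ (1 / (Real.pi * (Nat.factorial j : ℝ) * h ^ (j + 1))) *
        ((2 * Real.pi) * (K * (Real.exp (-b * ρ^2) / (2*b)))) := by
        apply mul_le_mul_of_nonneg_left _ hcoef
        exact mul_le_mul_of_nonneg_left hIneq (by positivity)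
    _ = (2:ℝ)^(j+1) * (P / (Nat.factorial j : ℝ)) * (c * c) := by
        rw [hcc, hK, hb, mul_pow]
        field_simp
        ring
    _ ≤ (2:ℝ)^(j+1) * 1 * (c * c) := by
        apply mul_le_mul_of_nonneg_right _ (by positivity)
        apply mul_le_mul_of_nonneg_left _ (by positivity)
        rw [div_le_one hF]
        exact hfac
    _ = ((2:ℝ)^(j+1) * c) * c := by ring
    _ ≤ 1 * c := mul_le_mul_of_nonneg_right h2c hcpos.le
    _ = c := one_mul c
end

section
/- For every E₀ > 0 there exist c₀ > 0 and θ₁ ∈ (0,1] such that for all θ ∈ (0,θ₁] and all ξ ∈ ℝ: |(1−iθ)²·(ξ/(1+θ²))² − E₀| ≥ c₀·θ·(1 + ξ²). -/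
open Complex

/-- Ellipticity near infinity of the complex-scaled free symbol:
|(1−iθ)²(ξ/(1+θ²))² − E₀| ≥ c₀θ(1+ξ²) for small θ. -/
theorem stmt10 (E₀ : ℝ) (hE₀ : 0 < E₀) :
    ∃ c₀ θ₁ : ℝ, 0 < c₀ ∧ 0 < θ₁ ∧ θ₁ ≤ 1 ∧
      ∀ θ : ℝ, θ ∈ Set.Ioc (0 : ℝ) θ₁ → ∀ ξ : ℝ,
        c₀ * θ * (1 + ξ ^ 2) ≤
          ‖(1 - θ * Complex.I) ^ 2 * ((ξ / (1 + θ ^ 2) : ℝ) : ℂ) ^ 2 - (E₀ : ℂ)‖ := by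
  have hc0 : (0:ℝ) < E₀ / (2 * (1 + 8 * E₀)) := by positivity
  refine ⟨E₀ / (2 * (1 + 8 * E₀)), 1/2, hc0, by norm_num, by norm_num, ?_⟩
  rintro θ ⟨hθ0, hθ1⟩ ξ
  set c₀ : ℝ := E₀ / (2 * (1 + 8 * E₀)) with hc₀def
  have hcE : c₀ * (2 * (1 + 8 * E₀)) = E₀ := by
    rw [hc₀def]; field_simp
  set η : ℝ := ξ / (1 + θ^2) with hηdef
  have hθ2 : (0:ℝ) < 1 + θ^2 := by positivity
  have hξ : ξ = η * (1 + θ^2) := by rw [hηdef]; field_simp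
  have hθ1' : θ ≤ 1/2 := hθ1
  have hθ1'' : θ ≤ 1 := by linarith
  have hθq : θ^2 ≤ 1/4 := by nlinarith
  have hθsq : (1 + θ^2)^2 ≤ 2 := by nlinarith [hθq, sq_nonneg (θ^2)]
  have hξ2 : ξ^2 ≤ 2 * η^2 := by
    calc ξ^2 = η^2 * (1+θ^2)^2 := by rw [hξ]; ring
      _ ≤ η^2 * 2 := mul_le_mul_of_nonneg_left hθsq (sq_nonneg η)
      _ = 2 * η^2 := by ring
  have hz : (1 - (θ:ℂ) * Complex.I) ^ 2 * ((ξ / (1 + θ ^ 2) : ℝ) : ℂ) ^ 2 - (E₀ : ℂ)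
      = (((1-θ^2)*η^2 - E₀ : ℝ) : ℂ) + ((-(2*θ*η^2) : ℝ) : ℂ) * Complex.I := by
    rw [show (ξ / (1 + θ ^ 2) : ℝ) = η from hηdef.symm]
    push_cast
    linear_combination ((θ:ℂ)*(η:ℂ))^2 * Complex.I_sq
  rw [hz]
  set w : ℂ := (((1-θ^2)*η^2 - E₀ : ℝ) : ℂ) + ((-(2*θ*η^2) : ℝ) : ℂ) * Complex.I with hwdef
  have hre : w.re = (1-θ^2)*η^2 - E₀ := by
    rw [hwdef]
    simp only [Complex.add_re, Complex.mul_re, Complex.ofReal_re, Complex.ofReal_im,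
      Complex.I_re, Complex.I_im]
    ring
  have him : w.im = -(2*θ*η^2) := by
    rw [hwdef]
    simp only [Complex.add_im, Complex.mul_im, Complex.ofReal_re, Complex.ofReal_im,
      Complex.I_re, Complex.I_im]
    ring
  have habs_re : |(1-θ^2)*η^2 - E₀| ≤ ‖w‖ := hre ▸ Complex.abs_re_le_norm w
  have habs_im : 2*θ*η^2 ≤ ‖w‖ := by
    have h := Complex.abs_im_le_norm w
    rw [him, abs_neg, _root_.abs_of_nonneg (by positivity)] at h
    exact h
  rcases le_or_gt (4 * E₀) (η^2) with hbig | hsmall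
  · -- large frequency: use the imaginary part
    have hc16 : c₀ ≤ 1/16 := by nlinarith
    have hcE2 : c₀ ≤ E₀ / 2 := by nlinarith
    have key : c₀ * (1 + ξ^2) ≤ 2 * η^2 := by nlinarith [hξ2, hbig, hc0.le]
    calc c₀ * θ * (1 + ξ^2) = θ * (c₀ * (1 + ξ^2)) := by ring
      _ ≤ θ * (2 * η^2) := mul_le_mul_of_nonneg_left key hθ0.le
      _ = 2 * θ * η^2 := by ring
      _ ≤ ‖w‖ := habs_im
  · have h1ξ : 1 + ξ^2 ≤ 1 + 8 * E₀ := by nlinarith [hξ2]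
    rcases le_or_gt (η^2) (E₀ / 2) with hlo | hmid
    · -- small frequency: real part is at least E₀/2
      have h2 : (1-θ^2)*η^2 ≤ E₀/2 := by nlinarith [sq_nonneg η, sq_nonneg (θ*η)]
      have h3 : E₀/2 ≤ |(1-θ^2)*η^2 - E₀| := by
        rw [abs_sub_comm, _root_.abs_of_nonneg (by linarith)]
        linarith
      calc c₀ * θ * (1 + ξ^2) ≤ c₀ * 1 * (1 + 8*E₀) := by
            apply mul_le_mul (mul_le_mul le_rfl hθ1'' hθ0.le hc0.le) h1ξ (by positivity)
              (by positivity)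
        _ = E₀ / 2 := by linear_combination hcE / 2
        _ ≤ |(1-θ^2)*η^2 - E₀| := h3
        _ ≤ ‖w‖ := habs_re
    · -- middle frequencies: imaginary part is at least θE₀
      calc c₀ * θ * (1 + ξ^2) = θ * (c₀ * (1 + ξ^2)) := by ring
        _ ≤ θ * (c₀ * (1 + 8*E₀)) := by
            apply mul_le_mul_of_nonneg_left (mul_le_mul_of_nonneg_left h1ξ hc0.le) hθ0.le
        _ = θ * (E₀/2) := by linear_combination θ * hcE / 2
        _ ≤ θ * η^2 := mul_le_mul_of_nonneg_left hmid.le hθ0.le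
        _ ≤ 2 * θ * η^2 := by linarith [mul_nonneg hθ0.le (sq_nonneg η)]
        _ ≤ ‖w‖ := habs_im
end

section
/- Let h > 0 and define the FBI–Bargmann transform T_h u(z) = ∫_ℝ e^{iφ(z,x)/h}·u(x) dx with phase φ(z,x) = i(z²/2 − √2·z·x + x²/2), for u a Schwartz function on ℝ. Then for every Schwartz function u and every z ∈ ℂ: T_h(−h²·u″ + x²·u)(z) = 2·z·h·(d/dz)(T_h u)(z) + h·(T_h u)(z). That is, T_h intertwines the harmonic oscillator (hD_x)² + x² with the operator 2zh∂_z + h. -/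
open MeasureTheory Real Filter Topology Metric Complex SchwartzMap

noncomputable def fbiK (h : ℝ) (w : ℂ) (x : ℝ) : ℂ :=
  Complex.exp (-(w ^ 2 / 2 - (Real.sqrt 2 : ℂ) * w * (x : ℂ) + (x : ℂ) ^ 2 / 2) / (h : ℂ))

-- norm of the kernel
lemma norm_fbiK (h : ℝ) (hh : 0 < h) (w : ℂ) (x : ℝ) :
    ‖fbiK h w x‖ = Real.exp ((-(w ^ 2).re / 2 + Real.sqrt 2 * w.re * x - x ^ 2 / 2) / h) := by
  rw [fbiK, Complex.norm_exp]
  congr 1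
  rw [div_ofReal_re]
  congr 1
  simp [Complex.sub_re, Complex.add_re, Complex.div_re, Complex.mul_re, ← Complex.ofReal_pow]
  ring

lemma fbiK_bound (h : ℝ) (hh : 0 < h) (R : ℝ) (hR : 0 ≤ R) (w : ℂ) (hw : ‖w‖ ≤ R) (x : ℝ) :
    ‖fbiK h w x‖ ≤ Real.exp (5 * R ^ 2 / (2 * h)) * Real.exp (-(x ^ 2 / (4 * h))) := by
  rw [norm_fbiK h hh, ← Real.exp_add]
  apply Real.exp_le_exp.2
  have key : -(w ^ 2).re / 2 + Real.sqrt 2 * w.re * x - x ^ 2 / 2 ≤ 5 * R ^ 2 / 2 - x ^ 2 / 4 := by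
    have h2 : -(w ^ 2).re ≤ R ^ 2 := by
      have := Complex.abs_re_le_norm (w ^ 2)
      have hb : ‖w ^ 2‖ ≤ R ^ 2 := by
        rw [norm_pow]
        exact pow_le_pow_left₀ (norm_nonneg w) hw 2
      have := abs_le.1 this
      linarith [this.1]
    have hr : |w.re| ≤ R := (Complex.abs_re_le_norm w).trans hw
    have hr1 := (abs_le.1 hr).1
    have hr2 := (abs_le.1 hr).2
    set a := |x| with ha
    have hax1 : x ≤ a := le_abs_self x
    have hax2 : -a ≤ x := neg_abs_le x
    have haa : a ^ 2 = x ^ 2 := sq_abs x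
    have ha0 : 0 ≤ a := abs_nonneg x
    have hs : Real.sqrt 2 ^ 2 = 2 := Real.sq_sqrt (by norm_num)
    have hs0 : (0:ℝ) ≤ Real.sqrt 2 := Real.sqrt_nonneg 2
    have keym : Real.sqrt 2 * w.re * x ≤ Real.sqrt 2 * (R * a) := by
      have : w.re * x ≤ R * a := by
        calc w.re * x ≤ |w.re * x| := le_abs_self _
        _ = |w.re| * a := by rw [abs_mul]
        _ ≤ R * a := by exact mul_le_mul_of_nonneg_right hr ha0
      nlinarith
    nlinarith [sq_nonneg (a / 2 - Real.sqrt 2 * R)]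
  have h4 : 5 * R ^ 2 / (2 * h) + -(x ^ 2 / (4 * h)) = (5 * R ^ 2 / 2 - x ^ 2 / 4) / h := by
    field_simp; ring
  rw [h4]
  exact (div_le_div_iff_of_pos_right hh).2 key

lemma one_add_sq_le (h : ℝ) (hh : 0 < h) (x : ℝ) :
    (1 + x ^ 2) ^ 2 ≤ (1 + 16 * h) ^ 2 * Real.exp (x ^ 2 / (8 * h)) := by
  have key : 1 + x ^ 2 ≤ (1 + 16 * h) * Real.exp (x ^ 2 / (16 * h)) := by
    have ht : x ^ 2 / (16 * h) ≤ Real.exp (x ^ 2 / (16 * h)) :=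
      (le_add_of_nonneg_right zero_le_one).trans (Real.add_one_le_exp _)
    have h1 : (1:ℝ) ≤ Real.exp (x ^ 2 / (16 * h)) := Real.one_le_exp (by positivity)
    have h16 : 16 * h * (x ^ 2 / (16 * h)) = x ^ 2 := by field_simp
    nlinarith
  have h0 : (0:ℝ) ≤ 1 + x ^ 2 := by positivity
  calc (1 + x ^ 2) ^ 2 ≤ ((1 + 16 * h) * Real.exp (x ^ 2 / (16 * h))) ^ 2 :=
        pow_le_pow_left₀ h0 key 2
    _ = (1 + 16 * h) ^ 2 * Real.exp (x ^ 2 / (8 * h)) := by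
        rw [mul_pow, ← Real.exp_nat_mul]
        congr 2
        field_simp; ring

lemma kernel_decay (h : ℝ) (hh : 0 < h) (R : ℝ) (hR : 0 ≤ R) (w : ℂ) (hw : ‖w‖ ≤ R) (x : ℝ) :
    (1 + x ^ 2) ^ 2 * ‖fbiK h w x‖ ≤
      ((1 + 16 * h) ^ 2 * Real.exp (5 * R ^ 2 / (2 * h))) * Real.exp (-(1 / (8 * h)) * x ^ 2) := by
  calc (1 + x ^ 2) ^ 2 * ‖fbiK h w x‖
      ≤ ((1 + 16 * h) ^ 2 * Real.exp (x ^ 2 / (8 * h))) *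
          (Real.exp (5 * R ^ 2 / (2 * h)) * Real.exp (-(x ^ 2 / (4 * h)))) := by
        apply mul_le_mul (one_add_sq_le h hh x) (fbiK_bound h hh R hR w hw x) (norm_nonneg _)
          (by positivity)
    _ = ((1 + 16 * h) ^ 2 * Real.exp (5 * R ^ 2 / (2 * h))) * Real.exp (-(1 / (8 * h)) * x ^ 2) := by
        rw [mul_mul_mul_comm, ← Real.exp_add]
        congr 2
        field_simp; ring

lemma continuous_fbiK_x (h : ℝ) (w : ℂ) : Continuous (fun x : ℝ => fbiK h w x) := by
  unfold fbiK
  fun_prop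

lemma continuous_fbiK_w (h : ℝ) (x : ℝ) : Continuous (fun w : ℂ => fbiK h w x) := by
  unfold fbiK
  fun_prop

lemma norm_quad_le (a b c : ℂ) (x : ℝ) :
    ‖a + b * x + c * (x : ℂ) ^ 2‖ ≤ (‖a‖ + ‖b‖ + ‖c‖) * (1 + x ^ 2) ^ 2 := by
  have h1 : ‖a + b * x + c * (x : ℂ) ^ 2‖ ≤ ‖a‖ + ‖b‖ * |x| + ‖c‖ * x ^ 2 := by
    refine (norm_add_le _ _).trans ?_
    gcongr
    · refine (norm_add_le _ _).trans ?_
      gcongr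
      rw [norm_mul, Complex.norm_real, Real.norm_eq_abs]
    · rw [norm_mul, ← Complex.ofReal_pow, Complex.norm_real, Real.norm_eq_abs, _root_.abs_of_nonneg (sq_nonneg x)]
  refine h1.trans ?_
  have hx : |x| ≤ 1 + x ^ 2 := by nlinarith [abs_nonneg x, _root_.sq_abs x]
  have h2 : (1:ℝ) + x ^ 2 ≤ (1 + x ^ 2) ^ 2 := by nlinarith [sq_nonneg x]
  have hx2 : |x| ≤ (1 + x ^ 2) ^ 2 := hx.trans h2
  have h1e : (1:ℝ) ≤ (1 + x ^ 2) ^ 2 := by nlinarith [sq_nonneg x]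
  have hx3 : x ^ 2 ≤ (1 + x ^ 2) ^ 2 := by nlinarith [sq_nonneg x]
  have := mul_le_mul_of_nonneg_left h1e (norm_nonneg a)
  have := mul_le_mul_of_nonneg_left hx2 (norm_nonneg b)
  have := mul_le_mul_of_nonneg_left hx3 (norm_nonneg c)
  nlinarith [norm_nonneg a, norm_nonneg b, norm_nonneg c]

lemma hasDerivAt_fbiK_x (h : ℝ) (hh : 0 < h) (w : ℂ) (x : ℝ) :
    HasDerivAt (fun x : ℝ => fbiK h w x)
      ((((Real.sqrt 2 : ℂ) * w - x) / h) * fbiK h w x) x := by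
  have hx : HasDerivAt (fun x : ℝ => (x : ℂ)) 1 x := by
    simpa using (hasDerivAt_id x).ofReal_comp
  have hx2 : HasDerivAt (fun x : ℝ => (x : ℂ) ^ 2) (2 * (x : ℂ)) x := by
    have := hx.mul hx
    simpa [pow_two, two_mul, Pi.mul_def] using this
  have h2 : HasDerivAt (fun x : ℝ =>
      -(w ^ 2 / 2 - (Real.sqrt 2 : ℂ) * w * x + (x : ℂ) ^ 2 / 2) / (h : ℂ))
      (((Real.sqrt 2 : ℂ) * w - x) / h) x := by
    have := ((((hasDerivAt_const x (w ^ 2 / 2)).sub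
      (hx.const_mul ((Real.sqrt 2 : ℂ) * w))).add (hx2.div_const 2)).neg).div_const (h : ℂ)
    refine this.congr_deriv ?_
    ring
  simpa [fbiK, mul_comm] using h2.cexp

lemma hasDerivAt_fbiK_w (h : ℝ) (hh : 0 < h) (w : ℂ) (x : ℝ) :
    HasDerivAt (fun w : ℂ => fbiK h w x)
      ((((Real.sqrt 2 : ℂ) * x - w) / h) * fbiK h w x) w := by
  have hx : HasDerivAt (fun w : ℂ => w) 1 w := hasDerivAt_id w
  have h2 : HasDerivAt (fun w : ℂ =>
      -(w ^ 2 / 2 - (Real.sqrt 2 : ℂ) * w * x + (x : ℂ) ^ 2 / 2) / (h : ℂ))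
      (((Real.sqrt 2 : ℂ) * x - w) / h) w := by
    have := ((((((hx.pow 2)).div_const 2).sub
      ((hx.const_mul ((Real.sqrt 2 : ℂ))).mul_const (x : ℂ))).add
      (hasDerivAt_const w ((x : ℂ) ^ 2 / 2))).neg).div_const (h : ℂ)
    refine this.congr_deriv ?_
    ring
  simpa [fbiK, mul_comm] using h2.cexp

lemma schwartz_bound (v : SchwartzMap ℝ ℂ) : ∃ C : ℝ, 0 ≤ C ∧ ∀ x : ℝ, ‖v x‖ ≤ C := by
  obtain ⟨C, hC0, hC⟩ := v.decay 0 0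
  refine ⟨C, hC0.le, fun x => ?_⟩
  have := hC x
  simpa using this

/-- Main integrability lemma: `P * fbiK * v` is integrable whenever `P` has quartic growth. -/
lemma key_integrable (h : ℝ) (hh : 0 < h) (w : ℂ) (v : SchwartzMap ℝ ℂ)
    (P : ℝ → ℂ) (hPc : Continuous P) (c0 : ℝ)
    (hPb : ∀ x : ℝ, ‖P x‖ ≤ c0 * (1 + x ^ 2) ^ 2) :
    MeasureTheory.Integrable (fun x : ℝ => P x * fbiK h w x * v x) := by
  obtain ⟨Cv, hCv0, hCv⟩ := schwartz_bound v
  have hc0 : 0 ≤ c0 := by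
    have := (norm_nonneg (P 0)).trans (hPb 0)
    nlinarith
  set K := (1 + 16 * h) ^ 2 * Real.exp (5 * ‖w‖ ^ 2 / (2 * h)) with hK
  have hKpos : 0 ≤ K := by positivity
  have hcont : Continuous (fun x : ℝ => P x * fbiK h w x * v x) :=
    (hPc.mul (continuous_fbiK_x h w)).mul v.continuous
  refine ((integrable_exp_neg_mul_sq (b := 1 / (8 * h)) (by positivity)).const_mul
    (c0 * K * Cv)).mono' hcont.aestronglyMeasurable (Filter.Eventually.of_forall fun x => ?_)
  have hbd : ‖P x * fbiK h w x * v x‖ ≤ (c0 * (1 + x ^ 2) ^ 2) * ‖fbiK h w x‖ * Cv := by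
    rw [norm_mul, norm_mul]
    gcongr
    · exact hPb x
    · exact hCv x
  refine hbd.trans ?_
  have h2 : (1 + x ^ 2) ^ 2 * ‖fbiK h w x‖ ≤ K * Real.exp (-(1 / (8 * h)) * x ^ 2) :=
    kernel_decay h hh ‖w‖ (norm_nonneg w) w le_rfl x
  calc (c0 * (1 + x ^ 2) ^ 2) * ‖fbiK h w x‖ * Cv
      = c0 * Cv * ((1 + x ^ 2) ^ 2 * ‖fbiK h w x‖) := by ring
    _ ≤ c0 * Cv * (K * Real.exp (-(1 / (8 * h)) * x ^ 2)) := by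
        exact mul_le_mul_of_nonneg_left h2 (by positivity)
    _ = c0 * K * Cv * Real.exp (-(1 / (8 * h)) * x ^ 2) := by ring

lemma gauss_tendsto (h : ℝ) (hh : 0 < h) (M : ℝ) {l : Filter ℝ}
    (hl : Filter.Tendsto (fun x : ℝ => x ^ 2) l Filter.atTop) :
    Filter.Tendsto (fun x : ℝ => M * Real.exp (-(1 / (8 * h)) * x ^ 2)) l (nhds 0) := by
  have h1 : Filter.Tendsto (fun x : ℝ => -(1 / (8 * h)) * x ^ 2) l Filter.atBot := by
    apply Filter.Tendsto.const_mul_atTop_of_neg _ hl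
    simp only [neg_neg, Left.neg_neg_iff]
    positivity
  have h2 := Real.tendsto_exp_atBot.comp h1
  have := h2.const_mul M
  simpa using this

/-- Pointwise decay of `P * fbiK * v` at `±∞`. -/
lemma key_tendsto (h : ℝ) (hh : 0 < h) (w : ℂ) (v : SchwartzMap ℝ ℂ)
    (P : ℝ → ℂ) (c0 : ℝ)
    (hPb : ∀ x : ℝ, ‖P x‖ ≤ c0 * (1 + x ^ 2) ^ 2) {l : Filter ℝ}
    (hl : Filter.Tendsto (fun x : ℝ => x ^ 2) l Filter.atTop) :
    Filter.Tendsto (fun x : ℝ => P x * fbiK h w x * v x) l (nhds 0) := by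
  obtain ⟨Cv, hCv0, hCv⟩ := schwartz_bound v
  have hc0 : 0 ≤ c0 := by
    have := (norm_nonneg (P 0)).trans (hPb 0)
    nlinarith
  set K := (1 + 16 * h) ^ 2 * Real.exp (5 * ‖w‖ ^ 2 / (2 * h)) with hK
  apply squeeze_zero_norm (a := fun x => c0 * K * Cv * Real.exp (-(1 / (8 * h)) * x ^ 2))
  · intro x
    have hbd : ‖P x * fbiK h w x * v x‖ ≤ (c0 * (1 + x ^ 2) ^ 2) * ‖fbiK h w x‖ * Cv := by
      rw [norm_mul, norm_mul]
      gcongr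
      · exact hPb x
      · exact hCv x
    refine hbd.trans ?_
    have h2 : (1 + x ^ 2) ^ 2 * ‖fbiK h w x‖ ≤ K * Real.exp (-(1 / (8 * h)) * x ^ 2) :=
      kernel_decay h hh ‖w‖ (norm_nonneg w) w le_rfl x
    calc (c0 * (1 + x ^ 2) ^ 2) * ‖fbiK h w x‖ * Cv
        = c0 * Cv * ((1 + x ^ 2) ^ 2 * ‖fbiK h w x‖) := by ring
      _ ≤ c0 * Cv * (K * Real.exp (-(1 / (8 * h)) * x ^ 2)) := by
          exact mul_le_mul_of_nonneg_left h2 (by positivity)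
      _ = c0 * K * Cv * Real.exp (-(1 / (8 * h)) * x ^ 2) := by ring
  · exact gauss_tendsto h hh _ hl

lemma sq_tendsto_atTop : Filter.Tendsto (fun x : ℝ => x ^ 2) Filter.atTop Filter.atTop :=
  tendsto_pow_atTop two_ne_zero

lemma sq_tendsto_atBot : Filter.Tendsto (fun x : ℝ => x ^ 2) Filter.atBot Filter.atTop := by
  have := sq_tendsto_atTop.comp (tendsto_abs_atBot_atTop (G := ℝ))
  simpa [Function.comp_def, sq_abs] using this

set_option maxHeartbeats 1000000 in
/-- The integral over `ℝ` of the derivative of a function vanishing at `±∞` is zero. -/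
lemma integral_hasDerivAt_zero {G G' : ℝ → ℂ}
    (hd : ∀ x : ℝ, HasDerivAt G (G' x) x) (hi : MeasureTheory.Integrable G')
    (ht : Filter.Tendsto G Filter.atTop (nhds 0))
    (hb : Filter.Tendsto G Filter.atBot (nhds 0)) :
    ∫ x : ℝ, G' x = 0 := by
  have h1 : ∫ x in Set.Iic (0:ℝ), G' x = G 0 - 0 :=
    MeasureTheory.integral_Iic_of_hasDerivAt_of_tendsto' (fun x _ => hd x) hi.integrableOn hb
  have h2 : ∫ x in Set.Ioi (0:ℝ), G' x = 0 - G 0 :=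
    MeasureTheory.integral_Ioi_of_hasDerivAt_of_tendsto' (fun x _ => hd x) hi.integrableOn ht
  rw [← intervalIntegral.integral_Iic_add_Ioi (b := (0:ℝ)) hi.integrableOn hi.integrableOn,
    h1, h2]
  ring

lemma schwartz_hasDerivAt (v : SchwartzMap ℝ ℂ) (x : ℝ) :
    HasDerivAt (fun t : ℝ => v t) ((derivCLM ℝ ℂ v) x) x := by
  rw [SchwartzMap.derivCLM_apply]
  exact (v.differentiable.differentiableAt).hasDerivAt

lemma norm_lin_le (a b : ℂ) (x : ℝ) :
    ‖a + b * x‖ ≤ (‖a‖ + ‖b‖) * (1 + x ^ 2) := by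
  have h1 : ‖a + b * x‖ ≤ ‖a‖ + ‖b‖ * |x| := by
    refine (norm_add_le _ _).trans ?_
    gcongr
    rw [norm_mul, Complex.norm_real, Real.norm_eq_abs]
  refine h1.trans ?_
  have hx : |x| ≤ 1 + x ^ 2 := by nlinarith [abs_nonneg x, _root_.sq_abs x]
  nlinarith [norm_nonneg a, norm_nonneg b, abs_nonneg x, sq_nonneg x]

/-- Integration by parts against the FBI kernel. -/
lemma ibp_general (h : ℝ) (hh : 0 < h) (z : ℂ) (v : SchwartzMap ℝ ℂ)
    (P P' : ℝ → ℂ) (hP : ∀ x : ℝ, HasDerivAt P (P' x) x)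
    (hPc : Continuous P) (hP'c : Continuous P') (c0 c1 : ℝ)
    (hPb : ∀ x : ℝ, ‖P x‖ ≤ c0 * (1 + x ^ 2))
    (hP'b : ∀ x : ℝ, ‖P' x‖ ≤ c1 * (1 + x ^ 2)) :
    ∫ x : ℝ, P x * fbiK h z x * (derivCLM ℝ ℂ v) x
      = - ∫ x : ℝ, (P' x + P x * (((Real.sqrt 2 : ℂ) * z - x) / h)) * fbiK h z x * v x := by
  have hc0 : 0 ≤ c0 := by
    have := (norm_nonneg (P 0)).trans (hPb 0)
    nlinarith
  have hc1 : 0 ≤ c1 := by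
    have := (norm_nonneg (P' 0)).trans (hP'b 0)
    nlinarith
  set Q : ℝ → ℂ := fun x => P' x + P x * (((Real.sqrt 2 : ℂ) * z - x) / h) with hQ
  -- growth bound on the linear factor
  set cz : ℝ := ‖(Real.sqrt 2 : ℂ) * z / h‖ + ‖(1 : ℂ) / h‖ with hcz
  have hlin : ∀ x : ℝ, ‖((Real.sqrt 2 : ℂ) * z - x) / h‖ ≤ cz * (1 + x ^ 2) := by
    intro x
    have : ((Real.sqrt 2 : ℂ) * z - x) / h
        = (Real.sqrt 2 : ℂ) * z / h + (-((1 : ℂ) / h)) * x := by ring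
    rw [this]
    refine (norm_lin_le _ _ x).trans ?_
    rw [norm_neg]
  have h1x : ∀ x : ℝ, (0:ℝ) ≤ 1 + x ^ 2 := fun x => by positivity
  have h1x2 : ∀ x : ℝ, (1:ℝ) + x ^ 2 ≤ (1 + x ^ 2) ^ 2 := fun x => by nlinarith [sq_nonneg x]
  have hQb : ∀ x : ℝ, ‖Q x‖ ≤ (c1 + c0 * cz) * (1 + x ^ 2) ^ 2 := by
    intro x
    refine (norm_add_le _ _).trans ?_
    have hA : ‖P' x‖ ≤ c1 * (1 + x ^ 2) ^ 2 :=
      (hP'b x).trans (mul_le_mul_of_nonneg_left (h1x2 x) hc1)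
    have hB : ‖P x * (((Real.sqrt 2 : ℂ) * z - x) / h)‖ ≤ c0 * cz * (1 + x ^ 2) ^ 2 := by
      rw [norm_mul]
      calc ‖P x‖ * ‖((Real.sqrt 2 : ℂ) * z - x) / h‖
          ≤ (c0 * (1 + x ^ 2)) * (cz * (1 + x ^ 2)) := by
            apply mul_le_mul (hPb x) (hlin x) (norm_nonneg _) (by positivity)
        _ = c0 * cz * ((1 + x ^ 2) * (1 + x ^ 2)) := by ring
        _ = c0 * cz * (1 + x ^ 2) ^ 2 := by ring
    linarith [hA, hB]
  have hcontlin : Continuous (fun x : ℝ => ((Real.sqrt 2 : ℂ) * z - x) / h) := by fun_prop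
  have hQc : Continuous Q := hP'c.add (hPc.mul hcontlin)
  have IntA : MeasureTheory.Integrable (fun x : ℝ => Q x * fbiK h z x * v x) :=
    key_integrable h hh z v Q hQc (c1 + c0 * cz) hQb
  have hPb2 : ∀ x : ℝ, ‖P x‖ ≤ c0 * (1 + x ^ 2) ^ 2 := fun x =>
    (hPb x).trans (mul_le_mul_of_nonneg_left (h1x2 x) hc0)
  have IntB : MeasureTheory.Integrable
      (fun x : ℝ => P x * fbiK h z x * (derivCLM ℝ ℂ v) x) :=
    key_integrable h hh z (derivCLM ℝ ℂ v) P hPc c0 hPb2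
  have hd : ∀ x : ℝ, HasDerivAt (fun x => P x * fbiK h z x * v x)
      ((fun x => Q x * fbiK h z x * v x + P x * fbiK h z x * (derivCLM ℝ ℂ v) x) x) x := by
    intro x
    have := ((hP x).mul (hasDerivAt_fbiK_x h hh z x)).mul (schwartz_hasDerivAt v x)
    refine this.congr_deriv ?_
    simp only [hQ, Pi.mul_apply]
    ring
  have hzero := integral_hasDerivAt_zero hd (IntA.add IntB)
    (key_tendsto h hh z v P c0 hPb2 sq_tendsto_atTop)
    (key_tendsto h hh z v P c0 hPb2 sq_tendsto_atBot)
  rw [MeasureTheory.integral_add IntA IntB] at hzero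
  linear_combination hzero

/-- The FBI–Bargmann transform T_h with phase φ(z,x) = i(z²/2 − √2 zx + x²/2)
intertwines the harmonic oscillator −h²∂ₓ² + x² with 2zh∂_z + h. -/
theorem stmt11 (h : ℝ) (hh : 0 < h) (u : SchwartzMap ℝ ℂ) (z : ℂ) :
    (∫ x : ℝ, Complex.exp (Complex.I *
        (Complex.I * (z ^ 2 / 2 - (Real.sqrt 2 : ℂ) * z * (x : ℂ) + (x : ℂ) ^ 2 / 2)) / (h : ℂ)) *
        (-(h : ℂ) ^ 2 * iteratedDeriv 2 (fun t : ℝ => u t) x + (x : ℂ) ^ 2 * u x))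
      = 2 * z * (h : ℂ) *
          deriv (fun w : ℂ => ∫ x : ℝ, Complex.exp (Complex.I *
            (Complex.I * (w ^ 2 / 2 - (Real.sqrt 2 : ℂ) * w * (x : ℂ) + (x : ℂ) ^ 2 / 2)) / (h : ℂ)) *
            u x) z
        + (h : ℂ) * ∫ x : ℝ, Complex.exp (Complex.I *
            (Complex.I * (z ^ 2 / 2 - (Real.sqrt 2 : ℂ) * z * (x : ℂ) + (x : ℂ) ^ 2 / 2)) / (h : ℂ)) *
            u x := by
  have hc : (h : ℂ) ≠ 0 := by exact_mod_cast hh.ne'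
  have hs2 : ((Real.sqrt 2 : ℝ) : ℂ) ^ 2 = 2 := by
    rw [← Complex.ofReal_pow, Real.sq_sqrt (by norm_num : (2:ℝ) ≥ 0)]
    norm_num
  -- rewrite the exponential kernel
  have hexp : ∀ (w : ℂ) (x : ℝ), Complex.exp (Complex.I *
      (Complex.I * (w ^ 2 / 2 - (Real.sqrt 2 : ℂ) * w * (x : ℂ) + (x : ℂ) ^ 2 / 2)) / (h : ℂ))
      = fbiK h w x := by
    intro w x
    unfold fbiK
    congr 1
    rw [← mul_assoc, Complex.I_mul_I]
    ring
  simp only [hexp]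
  -- second derivative of u
  have hiter : iteratedDeriv 2 (fun t : ℝ => u t)
      = fun x => (derivCLM ℝ ℂ (derivCLM ℝ ℂ u)) x := by
    funext x
    rw [iteratedDeriv_succ, iteratedDeriv_one]
    have hd1 : deriv (fun t : ℝ => u t) = fun x => (derivCLM ℝ ℂ u) x :=
      funext fun y => (SchwartzMap.derivCLM_apply (𝕜 := ℝ) u y).symm
    rw [hd1]
    exact (SchwartzMap.derivCLM_apply (𝕜 := ℝ) (derivCLM ℝ ℂ u) x).symm
  simp only [hiter]
  -- basic polynomial bounds
  have h1x2 : ∀ x : ℝ, (1:ℝ) + x ^ 2 ≤ (1 + x ^ 2) ^ 2 := fun x => by nlinarith [sq_nonneg x]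
  have hP1 : ∀ x : ℝ, ‖(1 : ℂ)‖ ≤ (1:ℝ) * (1 + x ^ 2) ^ 2 := by
    intro x
    rw [norm_one, one_mul]
    nlinarith [sq_nonneg x]
  -- integrability of the basic integrands
  have Ig0 : MeasureTheory.Integrable (fun x : ℝ => fbiK h z x * u x) := by
    have := key_integrable h hh z u (fun _ => 1) continuous_const 1 hP1
    simpa using this
  have Ig1 : MeasureTheory.Integrable (fun x : ℝ => (x : ℂ) * fbiK h z x * u x) := by
    refine key_integrable h hh z u (fun x : ℝ => (x : ℂ)) (by fun_prop) 1 ?_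
    intro x
    have hq := norm_quad_le 0 1 0 x
    simp only [zero_add, one_mul, zero_mul, add_zero, norm_zero, norm_one] at hq
    simpa using hq
  have Ig2 : MeasureTheory.Integrable (fun x : ℝ => (x : ℂ) ^ 2 * fbiK h z x * u x) := by
    refine key_integrable h hh z u (fun x : ℝ => (x : ℂ) ^ 2) (by fun_prop) 1 ?_
    intro x
    have hq := norm_quad_le 0 0 1 x
    simp only [zero_add, one_mul, zero_mul, add_zero, norm_zero, norm_one] at hq
    simpa using hq
  -- the linear combination lemma
  set J0 : ℂ := ∫ x : ℝ, fbiK h z x * u x with hJ0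
  set J1 : ℂ := ∫ x : ℝ, (x : ℂ) * fbiK h z x * u x with hJ1
  set J2 : ℂ := ∫ x : ℝ, (x : ℂ) ^ 2 * fbiK h z x * u x with hJ2
  have combo : ∀ a b c : ℂ,
      ∫ x : ℝ, (a + b * x + c * (x : ℂ) ^ 2) * fbiK h z x * u x
        = a * J0 + b * J1 + c * J2 := by
    intro a b c
    have e1 : (fun x : ℝ => (a + b * x + c * (x : ℂ) ^ 2) * fbiK h z x * u x)
        = fun x : ℝ => (a * (fbiK h z x * u x) + b * ((x : ℂ) * fbiK h z x * u x))
            + c * ((x : ℂ) ^ 2 * fbiK h z x * u x) := funext fun x => by ring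
    rw [e1]
    calc ∫ x : ℝ, (a * (fbiK h z x * u x) + b * ((x : ℂ) * fbiK h z x * u x))
            + c * ((x : ℂ) ^ 2 * fbiK h z x * u x)
        = (∫ x : ℝ, a * (fbiK h z x * u x) + b * ((x : ℂ) * fbiK h z x * u x))
            + ∫ x : ℝ, c * ((x : ℂ) ^ 2 * fbiK h z x * u x) :=
          MeasureTheory.integral_add ((Ig0.const_mul a).add (Ig1.const_mul b))
            (Ig2.const_mul c)
      _ = ((∫ x : ℝ, a * (fbiK h z x * u x)) + ∫ x : ℝ, b * ((x : ℂ) * fbiK h z x * u x))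
            + ∫ x : ℝ, c * ((x : ℂ) ^ 2 * fbiK h z x * u x) := by
          rw [MeasureTheory.integral_add (Ig0.const_mul a) (Ig1.const_mul b)]
      _ = a * J0 + b * J1 + c * J2 := by
          rw [MeasureTheory.integral_const_mul, MeasureTheory.integral_const_mul,
            MeasureTheory.integral_const_mul]
  -- derivative under the integral sign
  obtain ⟨Cu, hCu0, hCu⟩ := schwartz_bound u
  set R : ℝ := ‖z‖ + 1 with hRdef
  have hR0 : 0 ≤ R := by positivity
  set K : ℝ := (1 + 16 * h) ^ 2 * Real.exp (5 * R ^ 2 / (2 * h)) with hKdef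
  have hK0 : 0 ≤ K := by positivity
  set cR : ℝ := R / h + Real.sqrt 2 / h with hcRdef
  have hcR0 : 0 ≤ cR := by positivity
  have hnh : ‖(h : ℂ)‖ = h := by
    rw [Complex.norm_real, Real.norm_eq_abs, abs_of_pos hh]
  have hns : ‖((Real.sqrt 2 : ℝ) : ℂ)‖ = Real.sqrt 2 := by
    rw [Complex.norm_real, Real.norm_eq_abs, _root_.abs_of_nonneg (Real.sqrt_nonneg 2)]
  have hDer : HasDerivAt (fun w : ℂ => ∫ x : ℝ, fbiK h w x * u x)
      (∫ x : ℝ, (((Real.sqrt 2 : ℂ) * x - z) / h) * fbiK h z x * u x) z := by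
    have key := hasDerivAt_integral_of_dominated_loc_of_deriv_le
      (μ := MeasureTheory.volume)
      (F := fun (w : ℂ) (x : ℝ) => fbiK h w x * u x)
      (F' := fun (w : ℂ) (x : ℝ) => (((Real.sqrt 2 : ℂ) * x - w) / h) * fbiK h w x * u x)
      (x₀ := z) (s := Metric.ball z 1)
      (bound := fun x : ℝ => cR * Cu * K * Real.exp (-(1 / (8 * h)) * x ^ 2))
      (Metric.ball_mem_nhds z one_pos)
      (Filter.Eventually.of_forall fun w =>
        ((continuous_fbiK_x h w).mul u.continuous).aestronglyMeasurable)
      Ig0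
      (((Continuous.mul (by fun_prop) (continuous_fbiK_x h z)).mul
        u.continuous).aestronglyMeasurable)
      (Filter.Eventually.of_forall fun x => ?_)
      ((integrable_exp_neg_mul_sq (b := 1 / (8 * h)) (by positivity)).const_mul
        (cR * Cu * K))
      (Filter.Eventually.of_forall fun x w hw =>
        (hasDerivAt_fbiK_w h hh w x).mul_const (u x))
    · exact key.2
    · intro w hw
      have hwn : ‖w‖ ≤ R := by
        have h1 : ‖w - z‖ < 1 := mem_ball_iff_norm.mp hw
        calc ‖w‖ = ‖z + (w - z)‖ := by ring_nf
          _ ≤ ‖z‖ + ‖w - z‖ := norm_add_le _ _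
          _ ≤ ‖z‖ + 1 := by linarith
      have hlin : ‖((Real.sqrt 2 : ℂ) * x - w) / h‖ ≤ cR * (1 + x ^ 2) := by
        have e : ((Real.sqrt 2 : ℂ) * x - w) / h
            = -(w / h) + (((Real.sqrt 2 : ℝ) : ℂ) / h) * x := by ring
        rw [e]
        refine (norm_lin_le _ _ x).trans ?_
        have h1 : ‖-(w / (h:ℂ))‖ ≤ R / h := by
          rw [norm_neg, norm_div, hnh]
          exact (div_le_div_iff_of_pos_right hh).2 hwn
        have h2 : ‖((Real.sqrt 2 : ℝ) : ℂ) / h‖ = Real.sqrt 2 / h := by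
          rw [norm_div, hnh, hns]
        have := add_le_add h1 h2.le
        have h3 : (0:ℝ) ≤ 1 + x ^ 2 := by positivity
        rw [hcRdef]
        nlinarith [norm_nonneg (-(w / (h:ℂ))), norm_nonneg (((Real.sqrt 2 : ℝ) : ℂ) / (h:ℂ))]
      calc ‖(((Real.sqrt 2 : ℂ) * x - w) / h) * fbiK h w x * u x‖
          = ‖((Real.sqrt 2 : ℂ) * x - w) / h‖ * ‖fbiK h w x‖ * ‖u x‖ := by
            rw [norm_mul, norm_mul]
        _ ≤ (cR * (1 + x ^ 2)) * ‖fbiK h w x‖ * Cu := by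
            have h1 := mul_le_mul hlin (le_refl ‖fbiK h w x‖) (norm_nonneg _)
              (by positivity : (0:ℝ) ≤ cR * (1 + x ^ 2))
            exact mul_le_mul h1 (hCu x) (norm_nonneg _) (by positivity)
        _ = cR * Cu * ((1 + x ^ 2) * ‖fbiK h w x‖) := by ring
        _ ≤ cR * Cu * ((1 + x ^ 2) ^ 2 * ‖fbiK h w x‖) :=
            mul_le_mul_of_nonneg_left
              (mul_le_mul_of_nonneg_right (h1x2 x) (norm_nonneg _)) (by positivity)
        _ ≤ cR * Cu * (K * Real.exp (-(1 / (8 * h)) * x ^ 2)) :=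
            mul_le_mul_of_nonneg_left (kernel_decay h hh R hR0 w hwn x) (by positivity)
        _ = cR * Cu * K * Real.exp (-(1 / (8 * h)) * x ^ 2) := by ring
  rw [hDer.deriv]
  -- integration by parts, twice
  have hxc : ∀ x : ℝ, HasDerivAt (fun x : ℝ => (x : ℂ)) 1 x := fun x => by
    simpa using (hasDerivAt_id x).ofReal_comp
  have hLd : ∀ x : ℝ, HasDerivAt (fun x : ℝ => (((Real.sqrt 2 : ℂ) * z - x) / h))
      (-(1 / (h : ℂ))) x := by
    intro x
    have := ((hasDerivAt_const x ((Real.sqrt 2 : ℂ) * z)).sub (hxc x)).div_const (h : ℂ)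
    refine this.congr_deriv ?_
    ring
  set czz : ℝ := ‖(Real.sqrt 2 : ℂ) * z / h‖ + ‖(1 : ℂ) / h‖ with hczz
  have hLz : ∀ x : ℝ, ‖((Real.sqrt 2 : ℂ) * z - x) / h‖ ≤ czz * (1 + x ^ 2) := by
    intro x
    have e : ((Real.sqrt 2 : ℂ) * z - x) / h
        = (Real.sqrt 2 : ℂ) * z / h + (-(1 / (h : ℂ))) * x := by ring
    rw [e]
    refine (norm_lin_le _ _ x).trans ?_
    rw [norm_neg]
  have hL'b : ∀ x : ℝ, ‖-(1 / (h:ℂ))‖ ≤ ‖(1:ℂ)/h‖ * (1 + x ^ 2) := by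
    intro x
    rw [norm_neg]
    nlinarith [norm_nonneg ((1:ℂ)/(h:ℂ)), sq_nonneg x]
  have hone : ∀ x : ℝ, ‖(1 : ℂ)‖ ≤ (1:ℝ) * (1 + x ^ 2) := fun x => by
    rw [norm_one, one_mul]; nlinarith [sq_nonneg x]
  have hzero : ∀ x : ℝ, ‖(0 : ℂ)‖ ≤ (0:ℝ) * (1 + x ^ 2) := fun x => by
    rw [norm_zero, zero_mul]
  have hibp1 := ibp_general h hh z (derivCLM ℝ ℂ u) (fun _ => (1:ℂ)) (fun _ => (0:ℂ))
    (fun x => hasDerivAt_const x 1) continuous_const continuous_const 1 0 hone hzero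
  have hibp2 := ibp_general h hh z u (fun x : ℝ => ((Real.sqrt 2 : ℂ) * z - x) / h)
    (fun _ => -(1 / (h:ℂ))) hLd (by fun_prop) continuous_const czz (‖(1:ℂ)/(h:ℂ)‖) hLz hL'b
  simp only [one_mul, zero_add] at hibp1
  have hKu2 : ∫ x : ℝ, fbiK h z x * (derivCLM ℝ ℂ (derivCLM ℝ ℂ u)) x
      = ∫ x : ℝ, (-(1 / (h:ℂ)) + (((Real.sqrt 2 : ℂ) * z - x) / h)
          * (((Real.sqrt 2 : ℂ) * z - x) / h)) * fbiK h z x * u x := by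
    rw [hibp1, hibp2, neg_neg]
  -- express everything via J0, J1, J2
  have hcoef : ∀ x : ℝ, (-(1 / (h:ℂ)) + (((Real.sqrt 2 : ℂ) * z - x) / h)
        * (((Real.sqrt 2 : ℂ) * z - x) / h))
      = ((-(1 / (h:ℂ)) + 2 * z ^ 2 / (h:ℂ) ^ 2)
          + (-(2 * ((Real.sqrt 2 : ℝ) : ℂ) * z / (h:ℂ) ^ 2)) * x
          + (1 / (h:ℂ) ^ 2) * (x:ℂ) ^ 2) := by
    intro x
    linear_combination (z ^ 2 / (h:ℂ) ^ 2) * hs2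
  have hKu2' : ∫ x : ℝ, fbiK h z x * (derivCLM ℝ ℂ (derivCLM ℝ ℂ u)) x
      = (-(1 / (h:ℂ)) + 2 * z ^ 2 / (h:ℂ) ^ 2) * J0
          + (-(2 * ((Real.sqrt 2 : ℝ) : ℂ) * z / (h:ℂ) ^ 2)) * J1 + (1 / (h:ℂ) ^ 2) * J2 := by
    rw [hKu2, show (fun x : ℝ => (-(1 / (h:ℂ)) + (((Real.sqrt 2 : ℂ) * z - x) / h)
        * (((Real.sqrt 2 : ℂ) * z - x) / h)) * fbiK h z x * u x)
      = fun x : ℝ => ((-(1 / (h:ℂ)) + 2 * z ^ 2 / (h:ℂ) ^ 2)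
          + (-(2 * ((Real.sqrt 2 : ℝ) : ℂ) * z / (h:ℂ) ^ 2)) * x
          + (1 / (h:ℂ) ^ 2) * (x:ℂ) ^ 2) * fbiK h z x * u x
      from funext fun x => by rw [hcoef x]]
    exact combo _ _ _
  have hDerInt : ∫ x : ℝ, (((Real.sqrt 2 : ℂ) * x - z) / h) * fbiK h z x * u x
      = (-(z / (h:ℂ))) * J0 + (((Real.sqrt 2 : ℝ) : ℂ) / h) * J1 + 0 * J2 := by
    rw [show (fun x : ℝ => (((Real.sqrt 2 : ℂ) * x - z) / h) * fbiK h z x * u x)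
      = fun x : ℝ => ((-(z / (h:ℂ))) + (((Real.sqrt 2 : ℝ) : ℂ) / h) * x
          + 0 * (x:ℂ) ^ 2) * fbiK h z x * u x
      from funext fun x => by ring_nf]
    exact combo _ _ _
  -- split the left-hand side
  have Iu2 : MeasureTheory.Integrable
      (fun x : ℝ => fbiK h z x * (derivCLM ℝ ℂ (derivCLM ℝ ℂ u)) x) := by
    have := key_integrable h hh z (derivCLM ℝ ℂ (derivCLM ℝ ℂ u)) (fun _ => 1) continuous_const 1 hP1
    simpa using this
  have hLHS : ∫ x : ℝ, fbiK h z x * (-(h:ℂ) ^ 2 * (derivCLM ℝ ℂ (derivCLM ℝ ℂ u)) x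
        + (x:ℂ) ^ 2 * u x)
      = (-(h:ℂ) ^ 2) * (∫ x : ℝ, fbiK h z x * (derivCLM ℝ ℂ (derivCLM ℝ ℂ u)) x) + J2 := by
    rw [show (fun x : ℝ => fbiK h z x * (-(h:ℂ) ^ 2 * (derivCLM ℝ ℂ (derivCLM ℝ ℂ u)) x
        + (x:ℂ) ^ 2 * u x))
      = fun x : ℝ => (-(h:ℂ) ^ 2) * (fbiK h z x * (derivCLM ℝ ℂ (derivCLM ℝ ℂ u)) x)
          + (x:ℂ) ^ 2 * fbiK h z x * u x
      from funext fun x => by ring]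
    calc ∫ x : ℝ, ((-(h:ℂ) ^ 2) * (fbiK h z x * (derivCLM ℝ ℂ (derivCLM ℝ ℂ u)) x)
            + (x:ℂ) ^ 2 * fbiK h z x * u x)
        = (∫ x : ℝ, (-(h:ℂ) ^ 2) * (fbiK h z x * (derivCLM ℝ ℂ (derivCLM ℝ ℂ u)) x))
            + ∫ x : ℝ, (x:ℂ) ^ 2 * fbiK h z x * u x :=
          MeasureTheory.integral_add (Iu2.const_mul _) Ig2
      _ = (-(h:ℂ) ^ 2) * (∫ x : ℝ, fbiK h z x * (derivCLM ℝ ℂ (derivCLM ℝ ℂ u)) x) + J2 := by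
          rw [MeasureTheory.integral_const_mul]
  rw [hLHS, hKu2', hDerInt]
  linear_combination (J0 * ((h:ℂ) - 2 * z ^ 2 * ((h:ℂ) * (h:ℂ)⁻¹))
    + J1 * (2 * ((Real.sqrt 2 : ℝ) : ℂ) * z * ((h:ℂ) * (h:ℂ)⁻¹))
    + J2 * (-1 - (h:ℂ) * (h:ℂ)⁻¹)) * (mul_inv_cancel₀ hc)
end
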